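/- Define f_{B_l}(t) = Σ_{k=0}^{l} (-1)^k C(l,k)·C(l+k,k)·t^k and f_{D_l}(t) = Σ_{k=0}^{l} (-1)^k (C(l,k)·C(l+k-1,k) + C(l-2,k-2)·C(l+k-2,k))·t^k as polynomials over ℚ. Then for all l ≥ 4, f_{D_l}(t) = ((l-2)/(2(l-1)))·f_{B_l}(t) + (l/(2(l-1)))·(1-2t)·f_{B_{l-1}}(t). -/

import Mathlib

open Polynomial Finset

noncomputable def fB (l : ℕ) : Polynomial ℚ :=
  ∑ k ∈ Finset.range (l + 1),
    Polynomial.C ((-1 : ℚ) ^ k * (l.choose k) * ((l + k).choose k)) * Polynomial.X ^ k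
noncomputable def fD (l : ℕ) : Polynomial ℚ :=
  ∑ k ∈ Finset.range (l + 1),
    Polynomial.C ((-1 : ℚ) ^ k *
      ((l.choose k * (l + k - 1).choose k
        + if 2 ≤ k then (l - 2).choose (k - 2) * (l + k - 2).choose k else 0 : ℕ) : ℚ)) *
      Polynomial.X ^ k

open Nat Polynomial Finset

lemma fact_q (a : ℕ) : ((a+1)! : ℚ) = (a+1) * (a ! : ℚ) := by
  rw [Nat.factorial_succ]; push_cast; ring

lemma key (m j : ℕ) :
    2*((m:ℚ)+j+1) * (((m+j+2).choose (m+2) : ℚ) * ((2*m+j+3).choose (m+2) : ℚ)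
        + ((m+j).choose m : ℚ) * ((2*m+j+2).choose (m+2) : ℚ))
    = ((m:ℚ)+j) * ((m+j+2).choose (m+2) : ℚ) * ((2*m+j+4).choose (m+2) : ℚ)
    + ((m:ℚ)+j+2) * ((m+j+1).choose (m+2) : ℚ) * ((2*m+j+3).choose (m+2) : ℚ)
    + 2*((m:ℚ)+j+2) * ((m+j+1).choose (m+1) : ℚ) * ((2*m+j+2).choose (m+1) : ℚ) := by
  -- Pascal to remove (m+j+1).choose (m+2)
  have hp : ((m+j+1).choose (m+2) : ℚ)
      = ((m+j+2).choose (m+2) : ℚ) - ((m+j+1).choose (m+1) : ℚ) := by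
    have h : (m+j+2).choose (m+2) = (m+j+1).choose (m+1) + (m+j+1).choose (m+2) :=
      Nat.choose_succ_succ (m+j+1) (m+1)
    rw [h]; push_cast; ring
  rw [hp]
  have e1 : ((m+j+2).choose (m+2) : ℚ) = ((m+j+2)! : ℚ) / (((m+2)! : ℚ) * (j ! : ℚ)) := by
    rw [Nat.cast_choose ℚ (by omega), show m+j+2-(m+2) = j by omega]
  have e2 : ((2*m+j+3).choose (m+2) : ℚ) = ((2*m+j+3)! : ℚ) / (((m+2)! : ℚ) * ((m+j+1)! : ℚ)) := by
    rw [Nat.cast_choose ℚ (by omega), show 2*m+j+3-(m+2) = m+j+1 by omega]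
  have e3 : ((m+j).choose m : ℚ) = ((m+j)! : ℚ) / ((m ! : ℚ) * (j ! : ℚ)) := by
    rw [Nat.cast_choose ℚ (by omega), show m+j-m = j by omega]
  have e4 : ((2*m+j+2).choose (m+2) : ℚ) = ((2*m+j+2)! : ℚ) / (((m+2)! : ℚ) * ((m+j)! : ℚ)) := by
    rw [Nat.cast_choose ℚ (by omega), show 2*m+j+2-(m+2) = m+j by omega]
  have e5 : ((2*m+j+4).choose (m+2) : ℚ) = ((2*m+j+4)! : ℚ) / (((m+2)! : ℚ) * ((m+j+2)! : ℚ)) := by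
    rw [Nat.cast_choose ℚ (by omega), show 2*m+j+4-(m+2) = m+j+2 by omega]
  have e6 : ((m+j+1).choose (m+1) : ℚ) = ((m+j+1)! : ℚ) / (((m+1)! : ℚ) * (j ! : ℚ)) := by
    rw [Nat.cast_choose ℚ (by omega), show m+j+1-(m+1) = j by omega]
  have e7 : ((2*m+j+2).choose (m+1) : ℚ) = ((2*m+j+2)! : ℚ) / (((m+1)! : ℚ) * ((m+j+1)! : ℚ)) := by
    rw [Nat.cast_choose ℚ (by omega), show 2*m+j+2-(m+1) = m+j+1 by omega]
  rw [e1, e2, e3, e4, e5, e6, e7]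
  have f1 : ((m+j+2)! : ℚ) = ((m:ℚ)+j+2) * (((m:ℚ)+j+1) * ((m+j)! : ℚ)) := by
    rw [show m+j+2 = (m+j+1)+1 by omega, fact_q, show m+j+1 = (m+j)+1 by omega, fact_q]
    push_cast; ring
  have f2 : ((m+j+1)! : ℚ) = ((m:ℚ)+j+1) * ((m+j)! : ℚ) := by
    rw [show m+j+1 = (m+j)+1 by omega, fact_q]; push_cast; ring
  have f3 : ((2*m+j+3)! : ℚ) = (2*(m:ℚ)+j+3) * ((2*m+j+2)! : ℚ) := by
    rw [show 2*m+j+3 = (2*m+j+2)+1 by omega, fact_q]; push_cast; ring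
  have f4 : ((2*m+j+4)! : ℚ) = (2*(m:ℚ)+j+4) * ((2*(m:ℚ)+j+3) * ((2*m+j+2)! : ℚ)) := by
    rw [show 2*m+j+4 = (2*m+j+3)+1 by omega, fact_q, show 2*m+j+3 = (2*m+j+2)+1 by omega, fact_q]
    push_cast; ring
  have f5 : ((m+2)! : ℚ) = ((m:ℚ)+2) * (((m:ℚ)+1) * (m ! : ℚ)) := by
    rw [show m+2 = (m+1)+1 by omega, fact_q, fact_q]; push_cast; ring
  have f6 : ((m+1)! : ℚ) = ((m:ℚ)+1) * (m ! : ℚ) := by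
    rw [fact_q]
  rw [f1, f2, f3, f4, f5, f6]
  have hm : (m ! : ℚ) ≠ 0 := Nat.cast_ne_zero.mpr (Nat.factorial_ne_zero m)
  have hj : (j ! : ℚ) ≠ 0 := Nat.cast_ne_zero.mpr (Nat.factorial_ne_zero j)
  have hmj : ((m+j)! : ℚ) ≠ 0 := Nat.cast_ne_zero.mpr (Nat.factorial_ne_zero _)
  have h2mj : ((2*m+j+2)! : ℚ) ≠ 0 := Nat.cast_ne_zero.mpr (Nat.factorial_ne_zero _)
  have hm1 : ((m:ℚ)+1) ≠ 0 := by positivity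
  have hm2 : ((m:ℚ)+2) ≠ 0 := by positivity
  have hmj1 : ((m:ℚ)+j+1) ≠ 0 := by positivity
  field_simp
  ring

lemma fB_coeff (l n : ℕ) :
    (fB l).coeff n = (-1 : ℚ) ^ n * (l.choose n) * ((l + n).choose n) := by
  unfold fB
  rw [finset_sum_coeff]
  simp only [coeff_C_mul, coeff_X_pow, mul_ite, mul_one, mul_zero]
  rw [Finset.sum_ite_eq (Finset.range (l+1)) n]
  split
  · rfl
  · rename_i h
    rw [Finset.mem_range, Nat.lt_succ_iff] at h
    rw [Nat.choose_eq_zero_of_lt (by omega)]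
    ring

lemma fD_coeff (l n : ℕ) :
    (fD l).coeff n = (-1 : ℚ) ^ n *
      ((l.choose n * (l + n - 1).choose n
        + if 2 ≤ n then (l - 2).choose (n - 2) * (l + n - 2).choose n else 0 : ℕ) : ℚ) := by
  unfold fD
  rw [finset_sum_coeff]
  simp only [coeff_C_mul, coeff_X_pow, mul_ite, mul_one, mul_zero]
  rw [Finset.sum_ite_eq (Finset.range (l+1)) n]
  split
  · rfl
  · rename_i h
    rw [Finset.mem_range, Nat.lt_succ_iff] at h
    rw [Nat.choose_eq_zero_of_lt (by omega)]
    have h2 : (l - 2).choose (n - 2) * (l + n - 2).choose n = 0 := by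
      rcases le_or_gt 2 l with hc | hc
      · rw [Nat.choose_eq_zero_of_lt (show l - 2 < n - 2 by omega)]; ring
      · rw [Nat.choose_eq_zero_of_lt (show l + n - 2 < n by omega)]; ring
    simp [h2]

theorem fD_eq_comb_fB (l : ℕ) (hl : 4 ≤ l) :
    fD l = Polynomial.C (((l : ℚ) - 2) / (2 * ((l : ℚ) - 1))) * fB l
      + Polynomial.C ((l : ℚ) / (2 * ((l : ℚ) - 1))) * (1 - 2 * Polynomial.X) * fB (l - 1) := by
  ext n
  have expand : Polynomial.C ((l : ℚ) / (2 * ((l : ℚ) - 1))) * (1 - 2 * Polynomial.X) * fB (l - 1)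
      = Polynomial.C ((l : ℚ) / (2 * ((l : ℚ) - 1))) * fB (l-1)
        - Polynomial.C (2 * ((l : ℚ) / (2 * ((l : ℚ) - 1)))) * (Polynomial.X * fB (l-1)) := by
    rw [Polynomial.C_mul, map_ofNat]; ring
  rw [expand, coeff_add, coeff_sub, coeff_C_mul, coeff_C_mul, coeff_C_mul, fD_coeff, fB_coeff, fB_coeff]
  rcases n with _ | k
  · -- n = 0
    rw [Polynomial.mul_coeff_zero, Polynomial.coeff_X_zero, zero_mul, mul_zero]
    have h1 : 2 * ((l:ℚ) - 1) ≠ 0 := by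
      have : (4:ℚ) ≤ (l:ℚ) := by exact_mod_cast hl
      intro h; nlinarith
    simp only [Nat.choose_zero_right, Nat.add_zero, Nat.choose_self]
    norm_num
    have h1' : (l:ℚ) - 1 ≠ 0 := by intro h; apply h1; rw [h]; ring
    field_simp
    ring
  · rw [Polynomial.coeff_X_mul, fB_coeff]
    rcases k with _ | m
    · -- n = 1
      have h1 : 2 * ((l:ℚ) - 1) ≠ 0 := by
        have : (4:ℚ) ≤ (l:ℚ) := by exact_mod_cast hl
        intro h; nlinarith
      rw [if_neg (by omega : ¬ 2 ≤ 0 + 1), show (0:ℕ) + 1 = 1 from rfl,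
        show l + 1 - 1 = l by omega, show l - 1 + 1 = l by omega,
        show l - 1 + 0 = l - 1 by omega]
      simp only [Nat.choose_one_right, Nat.choose_zero_right, pow_one, pow_zero]
      rw [Nat.cast_sub (show 1 ≤ l by omega)]
      push_cast
      have h1' : (l:ℚ) - 1 ≠ 0 := by intro h; apply h1; rw [h]; ring
      field_simp
      ring
    · -- n = m + 2
      rw [if_pos (by omega : 2 ≤ m + 1 + 1)]
      rcases le_or_gt (m + 1 + 1) l with h | h
      · obtain ⟨j, rfl⟩ := Nat.exists_eq_add_of_le h
        have hs1 : ((-1:ℚ))^(m+1+1) = (-1)^m := by rw [pow_succ, pow_succ]; ring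
        have hs2 : ((-1:ℚ))^(m+1) = -(-1)^m := by rw [pow_succ]; ring
        rw [hs1, hs2, show m+1+1 = m+2 by omega]
        rw [show m+2+j + (m+2) - 1 = 2*m+j+3 by omega,
            show m+2+j - 2 = m+j by omega,
            show m+2 - 2 = m by omega,
            show m+2+j + (m+2) - 2 = 2*m+j+2 by omega,
            show m+2+j + (m+2) = 2*m+j+4 by omega,
            show m+2+j - 1 = m+j+1 by omega,
            show m+j+1 + (m+2) = 2*m+j+3 by omega,
            show m+j+1 + (m+1) = 2*m+j+2 by omega,
            show (m+2+j).choose (m+2) = (m+j+2).choose (m+2) by rw [show m+2+j = m+j+2 by omega]]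
        have hd : ((m:ℚ) + 2 + (j:ℚ) - 1) ≠ 0 := by
          have e : ((m:ℚ) + 2 + (j:ℚ) - 1) = (m:ℚ) + (j:ℚ) + 1 := by ring
          rw [e]; positivity
        have hk := key m j
        push_cast at hk ⊢
        field_simp
        linear_combination hk
      · rw [show m+1+1-2 = m by omega,
            Nat.choose_eq_zero_of_lt (show l < m+1+1 by omega),
            Nat.choose_eq_zero_of_lt (show l - 2 < m by omega),
            Nat.choose_eq_zero_of_lt (show l - 1 < m+1+1 by omega),
            Nat.choose_eq_zero_of_lt (show l - 1 < m+1 by omega)]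
        push_cast
        ring
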